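/- arXiv:1704.04449 — 4 statements merged into one kernel-verified Lean document; each statement's English description precedes it below -/
import Mathlib

section
/- Let R be a principal ideal domain and V a finitely generated free R-module. If submodules A and B of V are both direct summands of V, then A ∩ B is a direct summand of V. -/
/-- Over a PID `R`, if submodules `A` and `B` of a finitely
generated free module `V` are both direct summands of `V`, then so is `A ⊓ B`. -/
theorem inf_of_direct_summands_is_direct_summand
    {R : Type*} [CommRing R] [IsDomain R] [IsPrincipalIdealRing R]
    {V : Type*} [AddCommGroup V] [Module R V] [Module.Free R V] [Module.Finite R V]
    (A B : Submodule R V)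
    (hA : ∃ C : Submodule R V, A ⊓ C = ⊥ ∧ A ⊔ C = ⊤)
    (hB : ∃ C : Submodule R V, B ⊓ C = ⊥ ∧ B ⊔ C = ⊤) :
    ∃ C : Submodule R V, (A ⊓ B) ⊓ C = ⊥ ∧ (A ⊓ B) ⊔ C = ⊤ := by
  set N := A ⊓ B with hN
  -- V ⧸ N embeds into (V⧸A) × (V⧸B)
  have φ : V →ₗ[R] (V ⧸ A) × (V ⧸ B) := (A.mkQ).prod (B.mkQ)
  -- quotient by a direct summand is torsion-free
  have hquotA : NoZeroSMulDivisors R (V ⧸ A) := by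
    obtain ⟨C, h1, h2⟩ := hA
    have hc : IsCompl A C := ⟨disjoint_iff.2 h1, codisjoint_iff.2 h2⟩
    haveI : NoZeroSMulDivisors R C := ⟨fun h => by simpa using h⟩
    exact (Submodule.quotientEquivOfIsCompl A C hc).injective.noZeroSMulDivisors _
      (map_zero _) (fun c x => map_smul _ c x)
  have hquotB : NoZeroSMulDivisors R (V ⧸ B) := by
    obtain ⟨C, h1, h2⟩ := hB
    have hc : IsCompl B C := ⟨disjoint_iff.2 h1, codisjoint_iff.2 h2⟩
    haveI : NoZeroSMulDivisors R C := ⟨fun h => by simpa using h⟩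
    exact (Submodule.quotientEquivOfIsCompl B C hc).injective.noZeroSMulDivisors _
      (map_zero _) (fun c x => map_smul _ c x)
  -- hence V ⧸ N is torsion-free
  have hker : LinearMap.ker ((A.mkQ).prod (B.mkQ)) = N := by
    rw [LinearMap.ker_prod, Submodule.ker_mkQ, Submodule.ker_mkQ]
  have htf : NoZeroSMulDivisors R (V ⧸ N) := by
    have e : (V ⧸ N) ≃ₗ[R] LinearMap.range ((A.mkQ).prod (B.mkQ)) :=
      (Submodule.quotEquivOfEq _ _ hker.symm).trans ((A.mkQ).prod (B.mkQ)).quotKerEquivRange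
    haveI : NoZeroSMulDivisors R (LinearMap.range ((A.mkQ).prod (B.mkQ))) :=
      ⟨fun h => by simpa using h⟩
    exact e.injective.noZeroSMulDivisors e.toLinearMap (map_zero _) (fun c x => map_smul _ c x)
  -- so V ⧸ N is free, hence projective, and the quotient map splits
  haveI := htf
  haveI : Module.Free R (V ⧸ N) := Module.free_of_finite_type_torsion_free'
  haveI : Module.Projective R (V ⧸ N) := inferInstance
  obtain ⟨s, hs⟩ := Module.projective_lifting_property N.mkQ LinearMap.id N.mkQ_surjective
  -- projection onto N : π = id - s ∘ mkQ
  have hmem : ∀ x : V, x - s (N.mkQ x) ∈ N := by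
    intro x
    rw [← Submodule.Quotient.mk_eq_zero, Submodule.Quotient.mk_sub]
    have : N.mkQ (s (N.mkQ x)) = N.mkQ x := LinearMap.congr_fun hs (N.mkQ x)
    show N.mkQ x - N.mkQ (s (N.mkQ x)) = 0
    rw [this, sub_self]
  let π : V →ₗ[R] N := LinearMap.codRestrict N (LinearMap.id - s.comp N.mkQ)
    (fun x => hmem x)
  have hπ : ∀ x : N, π x = x := by
    intro x
    ext
    show (x : V) - s (N.mkQ x) = x
    rw [Submodule.mkQ_apply, (Submodule.Quotient.mk_eq_zero N).2 x.2, map_zero, sub_zero]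
  have hc := LinearMap.isCompl_of_proj hπ
  exact ⟨LinearMap.ker π, disjoint_iff.1 hc.disjoint, codisjoint_iff.1 hc.codisjoint⟩
end

section
/- Let R be a principal ideal domain, V a finitely generated free R-module, and A, B submodules of V with B a direct summand of V. Then A has a complement in V containing B (i.e., there exists a submodule E with B ⊆ E, A ∩ E = 0 and A + E = V) if and only if there exists a submodule D with V = A ⊕ B ⊕ D (i.e., the sum A + B + D equals V and is an internal direct sum). -/
/-- Over a PID `R`, let `A, B` be submodules of a finitely generated
free module `V` with `B` a direct summand of `V`. Then `A` has a complement in `V`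
containing `B` if and only if there is a submodule `D` with `V = A ⊕ B ⊕ D`
(internal direct sum). -/
theorem complement_containing_iff_direct_sum
    {R : Type*} [CommRing R] [IsDomain R] [IsPrincipalIdealRing R]
    {V : Type*} [AddCommGroup V] [Module R V] [Module.Free R V] [Module.Finite R V]
    (A B : Submodule R V)
    (hB : ∃ C : Submodule R V, B ⊓ C = ⊥ ∧ B ⊔ C = ⊤) :
    (∃ E : Submodule R V, B ≤ E ∧ A ⊓ E = ⊥ ∧ A ⊔ E = ⊤) ↔
      (∃ D : Submodule R V, A ⊓ B = ⊥ ∧ (A ⊔ B) ⊓ D = ⊥ ∧ A ⊔ B ⊔ D = ⊤) := by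
  obtain ⟨C, hBC, hBCtop⟩ := hB
  constructor
  · rintro ⟨E, hBE, hAE, hAEtop⟩
    refine ⟨C ⊓ E, ?_, ?_, ?_⟩
    · exact le_bot_iff.mp (hAE ▸ inf_le_inf_left A hBE)
    · rw [eq_bot_iff]
      rintro x hx
      obtain ⟨hxAB, hxCE⟩ := Submodule.mem_inf.mp hx
      obtain ⟨hxC, hxE⟩ := Submodule.mem_inf.mp hxCE
      obtain ⟨a, ha, b, hb, rfl⟩ := Submodule.mem_sup.mp hxAB
      have haE : a ∈ A ⊓ E := ⟨ha, by
        have : a = (a + b) - b := by abel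
        rw [this]; exact Submodule.sub_mem _ hxE (hBE hb)⟩
      rw [hAE] at haE
      have : a = 0 := haE
      subst this
      rw [zero_add] at hxC ⊢
      have : b ∈ B ⊓ C := ⟨hb, hxC⟩
      rw [hBC] at this
      simpa using this
    · have hE : B ⊔ C ⊓ E = E := by
        rw [← sup_inf_assoc_of_le C hBE, hBCtop, top_inf_eq]
      rw [sup_assoc, hE, hAEtop]
  · rintro ⟨D, hAB, hABD, htop⟩
    refine ⟨B ⊔ D, le_sup_left, ?_, by rw [← sup_assoc, htop]⟩
    rw [eq_bot_iff]
    intro x hx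
    obtain ⟨hxA, hxBD⟩ := Submodule.mem_inf.mp hx
    obtain ⟨b, hb, d, hd, rfl⟩ := Submodule.mem_sup.mp hxBD
    have hdmem : d ∈ (A ⊔ B) ⊓ D := ⟨by
      have : d = (b + d) - b := by abel
      rw [this]
      exact Submodule.sub_mem _ (Submodule.mem_sup_left hxA) (Submodule.mem_sup_right hb), hd⟩
    rw [hABD] at hdmem
    have : d = 0 := hdmem
    subst this
    rw [add_zero] at hxA ⊢
    have : b ∈ A ⊓ B := ⟨hxA, hb⟩
    rw [hAB] at this
    simpa using this
end

section
/- Let R be a principal ideal domain and V a finitely generated free R-module. Let (v₀, C₀), …, (v_p, C_p) be pairs of an element vᵢ ∈ V and a submodule Cᵢ ⊆ V such that V = R·vᵢ ⊕ Cᵢ for each i (i.e., R·vᵢ ∩ Cᵢ = 0 and R·vᵢ + Cᵢ = V). Then the following are equivalent: (a) there exists a submodule C ⊆ V with V = span(v₀,…,v_p) ⊕ C and Cⱼ = span(vᵢ : i ≠ j) ⊕ C for every j; (b) vᵢ ∈ Cⱼ for all i ≠ j. -/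
/-- Over a PID `R`, let `V` be a finitely generated free module and
`(v₀, C₀), …, (v_p, C_p)` pairs with `V = R·vᵢ ⊕ Cᵢ` for each `i`. Then the following
are equivalent: (a) there is a submodule `C` with `V = span(v₀,…,v_p) ⊕ C` and
`Cⱼ = span(vᵢ : i ≠ j) ⊕ C` for every `j`; (b) `vᵢ ∈ Cⱼ` for all `i ≠ j`. -/
theorem spans_simplex_iff_mem_complements
    {R : Type*} [CommRing R] [IsDomain R] [IsPrincipalIdealRing R]
    {V : Type*} [AddCommGroup V] [Module R V] [Module.Free R V] [Module.Finite R V]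
    (p : ℕ) (v : Fin (p + 1) → V) (C : Fin (p + 1) → Submodule R V)
    (hcompl : ∀ i, Submodule.span R {v i} ⊓ C i = ⊥ ∧ Submodule.span R {v i} ⊔ C i = ⊤) :
    (∃ D : Submodule R V,
        (Submodule.span R (Set.range v) ⊓ D = ⊥ ∧
          Submodule.span R (Set.range v) ⊔ D = ⊤) ∧
        ∀ j, Submodule.span R (v '' {i | i ≠ j}) ⊓ D = ⊥ ∧
          Submodule.span R (v '' {i | i ≠ j}) ⊔ D = C j) ↔
      (∀ i j, i ≠ j → v i ∈ C j) := by
  constructor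
  · rintro ⟨D, _, hD⟩ i j hij
    have h := (hD j).2
    have hv : v i ∈ Submodule.span R (v '' {k | k ≠ j}) :=
      Submodule.subset_span ⟨i, hij, rfl⟩
    rw [← h]
    exact Submodule.mem_sup_left hv
  · intro hb
    set D : Submodule R V := ⨅ j, C j with hDdef
    -- key decomposition lemma
    have key : ∀ S : Finset (Fin (p + 1)), ∀ x : V, (∀ k, k ∉ S → x ∈ C k) →
        ∃ y ∈ Submodule.span R (v '' ↑S), x - y ∈ D := by
      intro S
      induction S using Finset.induction_on with
      | empty =>
        intro x hx
        refine ⟨0, Submodule.zero_mem _, ?_⟩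
        rw [hDdef, Submodule.mem_iInf]
        intro k
        simpa using hx k (Finset.notMem_empty k)
      | @insert j S hjS ih =>
        intro x hx
        have hxtop : x ∈ Submodule.span R {v j} ⊔ C j := by
          rw [(hcompl j).2]; trivial
        obtain ⟨s, hs, c, hc, hsc⟩ := Submodule.mem_sup.1 hxtop
        obtain ⟨a, rfl⟩ := Submodule.mem_span_singleton.1 hs
        have hcmem : ∀ k, k ∉ S → (x - a • v j) ∈ C k := by
          intro k hk
          by_cases hkj : k = j
          · rw [hkj]
            have hxc : x - a • v j = c := by rw [← hsc]; abel
            rw [hxc]; exact hc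
          · have hx' : x ∈ C k := hx k (by simp [hk, hkj])
            exact Submodule.sub_mem _ hx'
              (Submodule.smul_mem _ _ (hb j k (fun h => hkj h.symm)))
        obtain ⟨y, hy, hd⟩ := ih (x - a • v j) hcmem
        refine ⟨a • v j + y, ?_, ?_⟩
        · apply Submodule.add_mem
          · exact Submodule.smul_mem _ _
              (Submodule.subset_span ⟨j, by simp, rfl⟩)
          · refine Submodule.span_mono (Set.image_mono (f := v) ?_) hy
            intro i hi; simp [hi]
        · have : x - (a • v j + y) = (x - a • v j) - y := by abel
          rw [this]; exact hd
    -- intersection with full span is trivial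
    have hbot : Submodule.span R (Set.range v) ⊓ D = ⊥ := by
      rw [eq_bot_iff]
      rintro x ⟨hx1, hx2⟩
      obtain ⟨c, rfl⟩ := (Submodule.mem_span_range_iff_exists_fun R).1 hx1
      have hz : ∀ j, c j • v j = 0 := by
        intro j
        have h1 : c j • v j ∈ C j := by
          have hsum : (∑ i, c i • v i) - ∑ i ∈ Finset.univ.erase j, c i • v i ∈ C j := by
            apply Submodule.sub_mem
            · exact (Submodule.mem_iInf _).1 hx2 j
            · refine Submodule.sum_mem _ fun i hi => ?_
              exact Submodule.smul_mem _ _ (hb i j (Finset.ne_of_mem_erase hi))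
          have heq : (∑ i, c i • v i) - ∑ i ∈ Finset.univ.erase j, c i • v i
              = c j • v j := by
            rw [← Finset.sum_erase_add _ _ (Finset.mem_univ j)]
            abel
          rwa [heq] at hsum
        have h2 : c j • v j ∈ Submodule.span R {v j} :=
          Submodule.smul_mem _ _ (Submodule.mem_span_singleton_self _)
        have := (hcompl j).1 ▸ Submodule.mem_inf.2 ⟨h2, h1⟩
        simpa using this
      have : (∑ i, c i • v i) = 0 := Finset.sum_eq_zero fun i _ => hz i
      simp [this]
    refine ⟨D, ⟨hbot, ?_⟩, ?_⟩
    · rw [eq_top_iff]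
      intro x _
      obtain ⟨y, hy, hd⟩ := key Finset.univ x (fun k hk => absurd (Finset.mem_univ k) hk)
      have hx : x = y + (x - y) := by abel
      rw [hx]
      refine Submodule.add_mem_sup ?_ hd
      revert hy
      simp
    · intro j
      have hcoe : (↑({j}ᶜ : Finset (Fin (p + 1))) : Set (Fin (p + 1))) = {i | i ≠ j} := by
        ext i; simp
      constructor
      · rw [eq_bot_iff, ← hbot]
        exact inf_le_inf_right _
          (Submodule.span_mono (Set.image_subset_range v _))
      · apply le_antisymm
        · apply sup_le
          · rw [Submodule.span_le]
            rintro _ ⟨i, hi, rfl⟩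
            exact hb i j hi
          · exact iInf_le _ j
        · intro x hx
          obtain ⟨y, hy, hd⟩ := key ({j}ᶜ) x (by
            intro k hk
            have : k = j := by simpa using hk
            subst this; exact hx)
          rw [hcoe] at hy
          have hxe : x = y + (x - y) := by abel
          rw [hxe]
          exact Submodule.add_mem_sup hy hd
end

section
/- Let R be a principal ideal domain and V a finitely generated free R-module. Suppose V = A ⊕ B for submodules A, B, and let U, W be submodules of V with U ⊆ A and B ⊆ W. Let P(V, U, W) denote the set of pairs (f, C) where f is an injective R-linear map from a finitely generated free R-module into V with image contained in U, and C is a submodule of V with W ⊆ C, im(f) ∩ C = 0 and im(f) + C = V. Let P(A, U, W ∩ A) denote the analogous set with ambient module A and constraining submodules U and W ∩ A. Then the assignment (f, C) ↦ (f, C ∩ A) defines a bijection from P(V, U, W) to P(A, U, W ∩ A), with inverse given by (g, D) ↦ (g, D + B) (this sum being direct). -/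
/-- The set of pairs `(f, C)` where `f : M →ₗ[R] V` is injective with image contained
in `U`, and `C` is a submodule of the ambient submodule `Amb` containing `W` with
`im(f) ∩ C = 0` and `im(f) + C = Amb`. Taking `Amb = ⊤` recovers the pairs used in
the semisimplicial set `PBC(V, U, W)`; a general `Amb` models the ambient module `A`
viewed inside `V`. -/
def PBCpairs (R : Type*) [CommRing R] {V : Type*} [AddCommGroup V] [Module R V]
    (Amb U W : Submodule R V) (M : Type*) [AddCommGroup M] [Module R M] :
    Set ((M →ₗ[R] V) × Submodule R V) :=
  {fc | Function.Injective fc.1 ∧ LinearMap.range fc.1 ≤ U ∧ fc.2 ≤ Amb ∧ W ≤ fc.2 ∧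
    LinearMap.range fc.1 ⊓ fc.2 = ⊥ ∧ LinearMap.range fc.1 ⊔ fc.2 = Amb}

/-- Over a PID `R`, suppose `V = A ⊕ B` and `U ⊆ A`, `B ⊆ W`. Then
`(f, C) ↦ (f, C ∩ A)` is a bijection from `PBC(V, U, W)` onto `PBC(A, U, W ∩ A)`,
with inverse `(g, D) ↦ (g, D + B)`, the latter sum being direct. -/
theorem pbc_pairs_bijection
    {R : Type*} [CommRing R] [IsDomain R] [IsPrincipalIdealRing R]
    {V : Type*} [AddCommGroup V] [Module R V] [Module.Free R V] [Module.Finite R V]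
    (A B U W : Submodule R V)
    (hAB : A ⊓ B = ⊥) (hAB' : A ⊔ B = ⊤) (hUA : U ≤ A) (hBW : B ≤ W)
    (M : Type*) [AddCommGroup M] [Module R M] [Module.Free R M] [Module.Finite R M] :
    Set.BijOn (fun fc : (M →ₗ[R] V) × Submodule R V => (fc.1, fc.2 ⊓ A))
        (PBCpairs R ⊤ U W M) (PBCpairs R A U (W ⊓ A) M) ∧
      (∀ gd ∈ PBCpairs R A U (W ⊓ A) M,
        gd.2 ⊓ B = ⊥ ∧ (gd.1, gd.2 ⊔ B) ∈ PBCpairs R ⊤ U W M ∧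
          (gd.2 ⊔ B) ⊓ A = gd.2) ∧
      (∀ fc ∈ PBCpairs R ⊤ U W M, (fc.2 ⊓ A) ⊔ B = fc.2) := by

  -- modular-lattice facts
  have key1 : ∀ C : Submodule R V, B ≤ C → (C ⊓ A) ⊔ B = C := by
    intro C hBC
    rw [inf_sup_assoc_of_le _ hBC, hAB', inf_top_eq]
  have key2 : ∀ D : Submodule R V, D ≤ A → (D ⊔ B) ⊓ A = D := by
    intro D hDA
    rw [sup_inf_assoc_of_le _ hDA, inf_comm B A, hAB, sup_bot_eq]
  have fwd : ∀ fc ∈ PBCpairs R ⊤ U W M,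
      (fc.1, fc.2 ⊓ A) ∈ PBCpairs R A U (W ⊓ A) M := by
    rintro ⟨f, C⟩ ⟨hinj, hrU, -, hWC, hinf, hsup⟩
    refine ⟨hinj, hrU, inf_le_right, inf_le_inf_right A hWC, ?_, ?_⟩
    · exact le_antisymm (le_trans (inf_le_inf_left _ inf_le_left) hinf.le) bot_le
    · have hfA : LinearMap.range f ≤ A := hrU.trans hUA
      calc LinearMap.range f ⊔ (C ⊓ A) = (LinearMap.range f ⊔ C) ⊓ A := by
            rw [sup_inf_assoc_of_le _ hfA]
        _ = A := by rw [hsup, top_inf_eq]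
  have bwd : ∀ gd ∈ PBCpairs R A U (W ⊓ A) M,
      (gd.1, gd.2 ⊔ B) ∈ PBCpairs R ⊤ U W M := by
    rintro ⟨g, D⟩ ⟨hinj, hrU, hDA, hWD, hinf, hsup⟩
    refine ⟨hinj, hrU, le_top, ?_, ?_, ?_⟩
    · have : W = (W ⊓ A) ⊔ B := (key1 W hBW).symm
      rw [this]
      exact sup_le_sup_right hWD B
    · have hgA : LinearMap.range g ≤ A := hrU.trans hUA
      have : LinearMap.range g ⊓ (D ⊔ B) ≤ LinearMap.range g ⊓ ((D ⊔ B) ⊓ A) := by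
        simp only [le_inf_iff]
        exact ⟨inf_le_left, inf_le_right, le_trans inf_le_left hgA⟩
      rw [key2 D hDA] at this
      exact le_antisymm (this.trans hinf.le) bot_le
    · rw [← sup_assoc, hsup, hAB']
  refine ⟨⟨fwd, ?_, ?_⟩, ?_, ?_⟩
  · rintro ⟨f, C⟩ ⟨-, -, -, hWC, -, -⟩ ⟨f', C'⟩ ⟨-, -, -, hWC', -, -⟩ h
    simp only [Prod.mk.injEq] at h
    have hC : C = C' := by
      rw [← key1 C (hBW.trans hWC), ← key1 C' (hBW.trans hWC'), h.2]
    exact Prod.ext h.1 hC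
  · intro gd hgd
    obtain ⟨-, -, hDA, -, -, -⟩ := id hgd
    refine ⟨(gd.1, gd.2 ⊔ B), bwd _ hgd, ?_⟩
    show (gd.1, (gd.2 ⊔ B) ⊓ A) = gd
    rw [key2 _ hDA]
  · intro gd hgd
    obtain ⟨-, -, hDA, -, -, -⟩ := id hgd
    exact ⟨le_antisymm (le_trans (inf_le_inf_right B hDA) hAB.le) bot_le,
      bwd _ hgd, key2 _ hDA⟩
  · rintro ⟨f, C⟩ ⟨-, -, -, hWC, -, -⟩
    exact key1 C (hBW.trans hWC)
end
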